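/- Suppose f : ℝ → ℝ satisfies tan(ηL) = (β − α)η/(η² + αβ) for a sequence of positive reals η_n with η_n → ∞ and |η_n L − πk_n| ≤ π/2 for integers k_n. If additionally |tan(η_n L)| = |β − α|η_n/|η_n² + αβ|, then there exists a constant C > 0 and N such that for all n ≥ N: |η_n − πk_n/L| ≤ C/η_n. -/

import Mathlib

open Real Filter

lemma abs_le_abs_tan_aux {x : ℝ} (hx : |x| < π / 2) : |x| ≤ |Real.tan x| := by
  rcases lt_trichotomy x 0 with h | h | h
  · have h1 : 0 < -x := by linarith
    have h2 : -x < π / 2 := by rw [abs_of_neg h] at hx; linarith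
    have := Real.lt_tan h1 h2
    rw [Real.tan_neg] at this
    rw [abs_of_neg h]
    calc -x ≤ -Real.tan x := this.le
    _ ≤ |-Real.tan x| := le_abs_self _
    _ = |Real.tan x| := abs_neg _
  · simp [h]
  · have h2 : x < π / 2 := by rw [abs_of_pos h] at hx; exact hx
    have := Real.lt_tan h h2
    rw [abs_of_pos h]
    exact this.le.trans (le_abs_self _)

/-- Asymptotics of the roots of `tan(ηL) = (β−α)η/(η²+αβ)`: if `η_n → ∞`,
`|η_n L − π k_n| ≤ π/2`, and `|tan(η_n L)| = |β−α|η_n/|η_n²+αβ|`, then for some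
`C > 0` and all large `n`, `|η_n − π k_n/L| ≤ C/η_n`. -/
theorem robin_eigenvalue_asymptotics (L α β : ℝ) (hL : 0 < L) (hαβ : α ≠ β)
    (η : ℕ → ℝ) (k : ℕ → ℤ)
    (hpos : ∀ n, 0 < η n)
    (htend : Tendsto η atTop atTop)
    (hclose : ∀ n, |η n * L - π * (k n : ℝ)| ≤ π / 2)
    (htan : ∀ n, Real.tan (η n * L) = (β - α) * η n / ((η n)^2 + α * β))
    (habs : ∀ n, |Real.tan (η n * L)| = |β - α| * η n / |(η n)^2 + α * β|) :
    ∃ C : ℝ, 0 < C ∧ ∃ N : ℕ, ∀ n ≥ N, |η n - π * (k n : ℝ) / L| ≤ C / η n := by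
  have hba : 0 < |β - α| := abs_pos.mpr (sub_ne_zero.mpr (Ne.symm hαβ))
  refine ⟨2 * |β - α| / L, by positivity, ?_⟩
  obtain ⟨N, hN⟩ := (htend.eventually_ge_atTop (Real.sqrt (2 * |α * β|) + 1)).exists_forall_of_atTop
  refine ⟨N, fun n hn => ?_⟩
  have hηn := hpos n
  have hM : Real.sqrt (2 * |α * β|) + 1 ≤ η n := hN n hn
  have hs := Real.sq_sqrt (by positivity : (0:ℝ) ≤ 2 * |α * β|)
  have hs0 := Real.sqrt_nonneg (2 * |α * β|)
  have hsq : 2 * |α * β| ≤ (η n) ^ 2 := by nlinarith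
  have hab : -|α * β| ≤ α * β := neg_abs_le _
  have hden : (η n) ^ 2 / 2 ≤ (η n) ^ 2 + α * β := by nlinarith
  have hdenpos : 0 < (η n) ^ 2 + α * β := lt_of_lt_of_le (by positivity) hden
  set z := η n * L - π * (k n : ℝ) with hz
  have htz : Real.tan z = Real.tan (η n * L) := by
    have := Real.tan_periodic.sub_int_mul_eq (x := η n * L) (k n)
    rw [hz, mul_comm π ((k n : ℝ))]
    exact this
  have habs' : |Real.tan (η n * L)| = |β - α| * η n / ((η n) ^ 2 + α * β) := by
    rw [habs n, abs_of_pos hdenpos]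
  have htanpos : 0 < |Real.tan (η n * L)| := by
    rw [habs']; positivity
  have hzlt : |z| < π / 2 := by
    rcases lt_or_eq_of_le (hclose n) with h | h
    · exact h
    · exfalso
      have : Real.tan z = 0 := by
        rcases (abs_eq (by positivity : (0:ℝ) ≤ π / 2)).mp h with h' | h'
        · rw [hz, h', Real.tan_pi_div_two]
        · rw [hz, h', Real.tan_neg, Real.tan_pi_div_two, neg_zero]
      rw [htz] at this
      rw [this, abs_zero] at htanpos
      exact lt_irrefl 0 htanpos
  have key : |z| ≤ 2 * |β - α| / η n := by
    calc |z| ≤ |Real.tan z| := abs_le_abs_tan_aux hzlt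
    _ = |β - α| * η n / ((η n) ^ 2 + α * β) := by rw [htz, habs']
    _ ≤ |β - α| * η n / ((η n) ^ 2 / 2) := by
        apply div_le_div_of_nonneg_left (by positivity) (by positivity) hden
    _ = 2 * |β - α| / η n := by field_simp
  have heq : η n - π * (k n : ℝ) / L = z / L := by field_simp [hz]; exact hz.symm
  rw [heq, abs_div, abs_of_pos hL, div_le_div_iff₀ hL (hpos n)] at *
  calc |z| * η n ≤ (2 * |β - α| / η n) * η n := by
        exact mul_le_mul_of_nonneg_right key (hpos n).le
  _ = 2 * |β - α| := by field_simp
  _ = 2 * |β - α| / L * L := by field_simp
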